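/- arXiv:1412.2343 — 3 statements merged into one kernel-verified Lean document; each statement's English description precedes it below -/
import Mathlib

section
/- There exists a constant c₁ > 0 depending only on L such that for all β ∈ (0, μ₁) and all x ∈ (0, L), ∫₀^∞ e^{βt} p_D(t,x,x) dt ≤ c₁·[1/√β + 1/(μ₁−β)]. -/
set_option maxHeartbeats 1000000

open MeasureTheory Real

/-- The Dirichlet heat kernel on `(0,L)`. -/
noncomputable def dirichletKernel (L t x y : ℝ) : ℝ :=
  (2 / L) * ∑' n : ℕ,
    Real.exp (-((n:ℝ)+1)^2 * Real.pi^2 * t / (2*L^2)) *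
      Real.sin (((n:ℝ)+1) * Real.pi * x / L) * Real.sin (((n:ℝ)+1) * Real.pi * y / L)

lemma lint_exp_neg {c : ℝ} (hc : 0 < c) :
    ∫⁻ t in Set.Ioi (0:ℝ), ENNReal.ofReal (Real.exp (-(c*t))) = ENNReal.ofReal (1/c) := by
  have hint : IntegrableOn (fun t => Real.exp (-(c*t))) (Set.Ioi (0:ℝ)) := by
    simpa [neg_mul] using exp_neg_integrableOn_Ioi 0 hc
  rw [← ofReal_integral_eq_lintegral_ofReal hint
    (Filter.Eventually.of_forall fun t => (Real.exp_pos _).le)]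
  congr 1
  have hderiv : ∀ t ∈ Set.Ioi (0:ℝ),
      HasDerivAt (fun u => -Real.exp (-(c*u)) / c) (Real.exp (-(c*t))) t := by
    intro t _
    have h2 : HasDerivAt (fun u => Real.exp (-(c*u))) (Real.exp (-(c*t)) * (-c)) t := by
      have h1 : HasDerivAt (fun u : ℝ => -(c*u)) (-c) t := by
        simpa using ((hasDerivAt_id t).const_mul c).fun_neg
      exact h1.exp
    have h3 := (h2.fun_neg).div_const c
    rw [show -(Real.exp (-(c*t)) * -c) / c = Real.exp (-(c*t)) by field_simp [hc.ne']] at h3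
    exact h3
  have htend : Filter.Tendsto (fun u => -Real.exp (-(c*u)) / c) Filter.atTop (nhds 0) := by
    have h4 : Filter.Tendsto (fun u : ℝ => Real.exp (-(c*u))) Filter.atTop (nhds 0) := by
      have h5 : Filter.Tendsto (fun u : ℝ => c*u) Filter.atTop Filter.atTop :=
        Filter.Tendsto.const_mul_atTop hc Filter.tendsto_id
      exact Real.tendsto_exp_neg_atTop_nhds_zero.comp h5
    simpa using (h4.neg).div_const c
  have hcont : ContinuousOn (fun u => -Real.exp (-(c*u)) / c) (Set.Ici (0:ℝ)) :=
    (((Real.continuous_exp.comp (continuous_const.mul continuous_id).neg).neg).div_const c).continuousOn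
  have := integral_Ioi_of_hasDerivAt_of_tendsto
    (hcont.continuousWithinAt (Set.self_mem_Ici)) hderiv hint htend
  rw [this]; simp [mul_zero]; ring

lemma tsum_sq_bound : ∑' n:ℕ, ENNReal.ofReal (1/((n:ℝ)+2)^2) ≤ 1 := by
  rw [ENNReal.tsum_eq_iSup_sum]
  apply iSup_le
  intro s
  obtain ⟨N, hN⟩ := s.exists_nat_subset_range
  calc ∑ n ∈ s, ENNReal.ofReal (1/((n:ℝ)+2)^2)
      ≤ ∑ n ∈ Finset.range N, ENNReal.ofReal (1/((n:ℝ)+2)^2) :=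
        Finset.sum_le_sum_of_subset hN
    _ = ENNReal.ofReal (∑ n ∈ Finset.range N, 1/((n:ℝ)+2)^2) := by
        rw [ENNReal.ofReal_sum_of_nonneg]; intro i _; positivity
    _ ≤ ENNReal.ofReal 1 := by
        apply ENNReal.ofReal_le_ofReal
        have h1 : ∀ n : ℕ, 1/((n:ℝ)+2)^2 ≤ 1/((n:ℝ)+1) - 1/((n:ℝ)+1+1) := by
          intro n
          have he : 1/((n:ℝ)+1) - 1/((n:ℝ)+1+1) = 1/(((n:ℝ)+1)*((n:ℝ)+2)) := by
            rw [div_sub_div _ _ (by positivity) (by positivity)]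
            congr 1
            · ring
            · ring
          rw [he]
          apply one_div_le_one_div_of_le (by positivity)
          nlinarith [Nat.cast_nonneg (α := ℝ) n]
        calc ∑ n ∈ Finset.range N, 1/((n:ℝ)+2)^2
            ≤ ∑ n ∈ Finset.range N, (1/((n:ℝ)+1) - 1/((n:ℝ)+1+1)) :=
              Finset.sum_le_sum fun i _ => h1 i
          _ ≤ 1 := by
              have h2 := Finset.sum_range_sub' (fun k : ℕ => 1/((k:ℝ)+1)) N
              simp only [Nat.cast_add, Nat.cast_one, Nat.cast_zero] at h2
              rw [h2]
              have : 0 ≤ 1/((N:ℝ)+1) := by positivity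
              norm_num
              linarith
    _ = 1 := ENNReal.ofReal_one

/-- There is `c₁ > 0` depending only on `L` such that for all `β ∈ (0, μ₁)` and `x ∈ (0,L)`,
`∫₀^∞ e^{βt} p_D(t,x,x) dt ≤ c₁ (1/√β + 1/(μ₁ - β))`, where `μ₁ = π²/(2L²)`. -/
theorem dirichletKernel_exp_integral_upper (L : ℝ) (hL : 0 < L) :
    ∃ c₁ > (0:ℝ), ∀ β ∈ Set.Ioo (0:ℝ) (Real.pi^2 / (2*L^2)), ∀ x ∈ Set.Ioo (0:ℝ) L,
      ∫⁻ t in Set.Ioi (0:ℝ), ENNReal.ofReal (Real.exp (β * t) * dirichletKernel L t x x) ≤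
        ENNReal.ofReal (c₁ * (1 / Real.sqrt β + 1 / (Real.pi^2 / (2*L^2) - β))) := by
  have hπ := Real.pi_pos
  set μ : ℝ := Real.pi^2/(2*L^2) with hμdef
  have hμ : 0 < μ := by positivity
  have hsμ : 0 < Real.sqrt μ := Real.sqrt_pos.mpr hμ
  refine ⟨(2/L)*(1 + 2/Real.sqrt μ), by positivity, ?_⟩
  rintro β ⟨hβ0, hβμ⟩ x hx
  have hsβ : 0 < Real.sqrt β := Real.sqrt_pos.mpr hβ0
  -- positivity of the coefficients c n = (n+1)^2 μ - β
  have hc : ∀ n : ℕ, 0 < ((n:ℝ)+1)^2*μ - β := by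
    intro n
    have h1 : (1:ℝ) ≤ ((n:ℝ)+1)^2 := by nlinarith [Nat.cast_nonneg (α := ℝ) n]
    nlinarith
  -- pointwise bound
  have key : ∀ t ∈ Set.Ioi (0:ℝ),
      ENNReal.ofReal (Real.exp (β*t) * dirichletKernel L t x x) ≤
      ENNReal.ofReal (2/L) * ∑' n : ℕ,
        ENNReal.ofReal (Real.exp (-((((n:ℝ)+1)^2*μ - β)*t))) := by
    intro t ht
    have ht0 : 0 < t := ht
    set r := Real.exp (-(μ*t)) with hr
    have hr1 : r < 1 := by
      rw [hr, Real.exp_lt_one_iff]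
      nlinarith
    have hr0 : 0 ≤ r := (Real.exp_pos _).le
    -- summability of the dominating sequence
    have hble : ∀ n : ℕ, Real.exp (-(((n:ℝ)+1)^2*μ*t)) ≤ r * r^n := by
      intro n
      have h1 : Real.exp (-(((n:ℝ)+1)^2*μ*t)) ≤ Real.exp (((n:ℝ)+1) * (-(μ*t))) := by
        apply Real.exp_le_exp.mpr
        have h0 : ((n:ℝ)+1) * (μ*t) ≤ ((n:ℝ)+1)^2 * (μ*t) :=
          mul_le_mul_of_nonneg_right
            (by nlinarith [Nat.cast_nonneg (α := ℝ) n]) (mul_pos hμ ht0).le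
        nlinarith [h0]
      calc Real.exp (-(((n:ℝ)+1)^2*μ*t)) ≤ Real.exp (((n:ℝ)+1) * (-(μ*t))) := h1
        _ = r^(n+1) := by
            rw [hr, ← Real.exp_nat_mul]
            norm_num
        _ = r * r^n := by rw [pow_succ]; ring
    have hbsum : Summable (fun n : ℕ => Real.exp (-(((n:ℝ)+1)^2*μ*t))) :=
      Summable.of_nonneg_of_le (fun n => (Real.exp_pos _).le) hble
        ((summable_geometric_of_lt_one hr0 hr1).mul_left r)
    -- exponent identity
    have hexp : ∀ n:ℕ, -((n:ℝ)+1)^2 * Real.pi^2 * t / (2*L^2) = -(((n:ℝ)+1)^2*μ*t) := by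
      intro n
      rw [hμdef]
      field_simp
    -- summability of kernel terms and the comparison
    have hterm : ∀ n : ℕ,
        Real.exp (-((n:ℝ)+1)^2 * Real.pi^2 * t / (2*L^2)) *
          Real.sin (((n:ℝ)+1) * Real.pi * x / L) * Real.sin (((n:ℝ)+1) * Real.pi * x / L)
        ≤ Real.exp (-(((n:ℝ)+1)^2*μ*t)) := by
      intro n
      rw [hexp n, mul_assoc, ← sq]
      nth_rewrite 2 [← mul_one (Real.exp _)]
      exact mul_le_mul_of_nonneg_left (Real.sin_sq_le_one _) (Real.exp_pos _).le
    have htnn : ∀ n : ℕ, 0 ≤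
        Real.exp (-((n:ℝ)+1)^2 * Real.pi^2 * t / (2*L^2)) *
          Real.sin (((n:ℝ)+1) * Real.pi * x / L) * Real.sin (((n:ℝ)+1) * Real.pi * x / L) := by
      intro n
      rw [mul_assoc, ← sq]
      positivity
    have hasum : Summable (fun n : ℕ =>
        Real.exp (-((n:ℝ)+1)^2 * Real.pi^2 * t / (2*L^2)) *
          Real.sin (((n:ℝ)+1) * Real.pi * x / L) * Real.sin (((n:ℝ)+1) * Real.pi * x / L)) :=
      Summable.of_nonneg_of_le htnn hterm hbsum
    have hdk : dirichletKernel L t x x ≤ (2/L) * ∑' n : ℕ, Real.exp (-(((n:ℝ)+1)^2*μ*t)) := by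
      unfold dirichletKernel
      exact mul_le_mul_of_nonneg_left (Summable.tsum_le_tsum hterm hasum hbsum) (by positivity)
    have hb2 : Real.exp (β*t) * dirichletKernel L t x x ≤
        (2/L) * ∑' n : ℕ, Real.exp (-((((n:ℝ)+1)^2*μ - β)*t)) := by
      have h6 : Real.exp (β*t) * ((2/L) * ∑' n : ℕ, Real.exp (-(((n:ℝ)+1)^2*μ*t)))
          = (2/L) * ∑' n : ℕ, Real.exp (-((((n:ℝ)+1)^2*μ - β)*t)) := by
        rw [show Real.exp (β*t) * ((2/L) * ∑' n : ℕ, Real.exp (-(((n:ℝ)+1)^2*μ*t)))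
            = (2/L) * (Real.exp (β*t) * ∑' n : ℕ, Real.exp (-(((n:ℝ)+1)^2*μ*t))) by ring,
          ← tsum_mul_left]
        congr 1
        apply tsum_congr
        intro n
        rw [← Real.exp_add]
        congr 1
        ring
      calc Real.exp (β*t) * dirichletKernel L t x x
          ≤ Real.exp (β*t) * ((2/L) * ∑' n : ℕ, Real.exp (-(((n:ℝ)+1)^2*μ*t))) :=
            mul_le_mul_of_nonneg_left hdk (Real.exp_pos _).le
        _ = _ := h6
    have hcsum : Summable (fun n : ℕ => Real.exp (-((((n:ℝ)+1)^2*μ - β)*t))) := by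
      apply (hbsum.mul_left (Real.exp (β*t))).congr
      intro n
      rw [← Real.exp_add]
      congr 1
      ring
    calc ENNReal.ofReal (Real.exp (β*t) * dirichletKernel L t x x)
        ≤ ENNReal.ofReal ((2/L) * ∑' n : ℕ, Real.exp (-((((n:ℝ)+1)^2*μ - β)*t))) :=
          ENNReal.ofReal_le_ofReal hb2
      _ = ENNReal.ofReal (2/L) *
            ENNReal.ofReal (∑' n : ℕ, Real.exp (-((((n:ℝ)+1)^2*μ - β)*t))) :=
          ENNReal.ofReal_mul (by positivity)
      _ = ENNReal.ofReal (2/L) * ∑' n : ℕ,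
            ENNReal.ofReal (Real.exp (-((((n:ℝ)+1)^2*μ - β)*t))) := by
          rw [ENNReal.ofReal_tsum_of_nonneg (fun n => (Real.exp_pos _).le) hcsum]
  -- main computation
  calc ∫⁻ t in Set.Ioi (0:ℝ), ENNReal.ofReal (Real.exp (β * t) * dirichletKernel L t x x)
      ≤ ∫⁻ t in Set.Ioi (0:ℝ), ENNReal.ofReal (2/L) * ∑' n : ℕ,
          ENNReal.ofReal (Real.exp (-((((n:ℝ)+1)^2*μ - β)*t))) :=
        setLIntegral_mono' measurableSet_Ioi key
    _ = ENNReal.ofReal (2/L) * ∑' n : ℕ,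
          ∫⁻ t in Set.Ioi (0:ℝ), ENNReal.ofReal (Real.exp (-((((n:ℝ)+1)^2*μ - β)*t))) := by
        rw [lintegral_const_mul' _ _ ENNReal.ofReal_ne_top, lintegral_tsum]
        intro n
        exact (ENNReal.measurable_ofReal.comp
          (Real.measurable_exp.comp ((measurable_const.mul measurable_id).neg))).aemeasurable
    _ = ENNReal.ofReal (2/L) * ∑' n : ℕ, ENNReal.ofReal (1/(((n:ℝ)+1)^2*μ - β)) := by
        congr 1
        exact tsum_congr fun n => lint_exp_neg (hc n)
    _ ≤ ENNReal.ofReal (2/L) *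
          (ENNReal.ofReal (1/(μ - β)) + ENNReal.ofReal ((2/Real.sqrt μ) * (1/Real.sqrt β))) := by
        gcongr
        have hsplit := tsum_eq_zero_add'
          (f := fun n : ℕ => ENNReal.ofReal (1/(((n:ℝ)+1)^2*μ - β))) ENNReal.summable
        rw [hsplit]
        apply add_le_add
        · apply ENNReal.ofReal_le_ofReal
          norm_num
        · calc (∑' n : ℕ, (fun k : ℕ => ENNReal.ofReal (1/(((k:ℝ)+1)^2*μ - β))) (n+1))
              ≤ ∑' n : ℕ, ENNReal.ofReal (2/μ) * ENNReal.ofReal (1/((n:ℝ)+2)^2) := by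
                apply ENNReal.tsum_le_tsum
                intro n
                simp only [Nat.cast_add, Nat.cast_one]
                rw [← ENNReal.ofReal_mul (by positivity)]
                apply ENNReal.ofReal_le_ofReal
                have hB : (4:ℝ) ≤ ((n:ℝ)+2)^2 := by nlinarith [Nat.cast_nonneg (α := ℝ) n]
                have heq : 2/μ * (1/((n:ℝ)+2)^2) = 1/(((n:ℝ)+2)^2*μ/2) := by
                  field_simp
                have h0 : ((n:ℝ)+1+1) = (n:ℝ)+2 := by ring
                rw [h0, heq]
                apply one_div_le_one_div_of_le (by positivity)
                nlinarith
            _ = ENNReal.ofReal (2/μ) * ∑' n : ℕ, ENNReal.ofReal (1/((n:ℝ)+2)^2) :=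
                ENNReal.tsum_mul_left
            _ ≤ ENNReal.ofReal (2/μ) * 1 := mul_le_mul_right tsum_sq_bound _
            _ ≤ ENNReal.ofReal ((2/Real.sqrt μ) * (1/Real.sqrt β)) := by
                rw [mul_one]
                apply ENNReal.ofReal_le_ofReal
                have h7 : Real.sqrt β ≤ Real.sqrt μ := Real.sqrt_le_sqrt hβμ.le
                have h8 : 2/μ = (2/Real.sqrt μ) * (1/Real.sqrt μ) := by
                  rw [div_mul_div_comm, Real.mul_self_sqrt hμ.le]
                  norm_num
                rw [h8]
                gcongr
    _ ≤ ENNReal.ofReal ((2/L)*(1 + 2/Real.sqrt μ) * (1/Real.sqrt β + 1/(μ - β))) := by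
        have hμβ : 0 < μ - β := by linarith
        rw [← ENNReal.ofReal_add (one_div_nonneg.mpr hμβ.le) (by positivity),
          ← ENNReal.ofReal_mul (by positivity)]
        apply ENNReal.ofReal_le_ofReal
        have hs : 0 ≤ 1/Real.sqrt β := by positivity
        have hrr : 0 ≤ 1/(μ - β) := by positivity
        have ha : 0 ≤ 2/Real.sqrt μ := by positivity
        have hk : 0 ≤ 2/L := by positivity
        have h9 : 1/(μ-β) + (2/Real.sqrt μ)*(1/Real.sqrt β)
            ≤ (1 + 2/Real.sqrt μ)*(1/Real.sqrt β + 1/(μ-β)) := by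
          nlinarith [mul_nonneg ha hrr]
        calc (2/L) * (1/(μ-β) + (2/Real.sqrt μ)*(1/Real.sqrt β))
            ≤ (2/L) * ((1 + 2/Real.sqrt μ)*(1/Real.sqrt β + 1/(μ-β))) :=
              mul_le_mul_of_nonneg_left h9 hk
          _ = (2/L)*(1 + 2/Real.sqrt μ) * (1/Real.sqrt β + 1/(μ-β)) := by ring
end

section
/- For every ε ∈ (0, L/2) there exist t₀ > 0 and c₁ > 0, depending only on ε and L, such that for every β > 0 and all x, y ∈ [ε, L−ε], ∫₀^∞ e^{−βt} p_D(t,x,y)² dt ≥ c₁·exp(−(β+2μ₁)t₀)/(β+2μ₁). -/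
open MeasureTheory Real

lemma dk_term_abs_le (L t x y : ℝ) (n : ℕ) :
    |Real.exp (-((n:ℝ)+1)^2 * Real.pi^2 * t / (2*L^2)) *
      Real.sin (((n:ℝ)+1) * Real.pi * x / L) * Real.sin (((n:ℝ)+1) * Real.pi * y / L)|
    ≤ Real.exp (-((n:ℝ)+1)^2 * Real.pi^2 * t / (2*L^2)) := by
  rw [abs_mul, abs_mul, Real.abs_exp]
  calc Real.exp (-((n:ℝ)+1)^2 * Real.pi^2 * t / (2*L^2)) * |Real.sin (((n:ℝ)+1) * Real.pi * x / L)| *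
        |Real.sin (((n:ℝ)+1) * Real.pi * y / L)|
      ≤ Real.exp (-((n:ℝ)+1)^2 * Real.pi^2 * t / (2*L^2)) * 1 * 1 := by
        apply mul_le_mul (mul_le_mul le_rfl (Real.abs_sin_le_one _) (abs_nonneg _)
          (Real.exp_nonneg _)) (Real.abs_sin_le_one _) (abs_nonneg _)
        positivity
    _ = _ := by ring

lemma dk_exp_le (L t : ℝ) (hL : 0 < L) (ht : 0 < t) (n : ℕ) :
    Real.exp (-((n:ℝ)+1)^2 * Real.pi^2 * t / (2*L^2))
      ≤ Real.exp (-(Real.pi^2/(2*L^2)) * t) ^ (n+1) := by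
  rw [← Real.exp_nat_mul]
  apply Real.exp_le_exp.2
  have hc : ((n+1 : ℕ):ℝ) = (n:ℝ)+1 := by push_cast; ring
  rw [hc]
  have h1 : ((n:ℝ)+1) ≤ ((n:ℝ)+1)^2 := by nlinarith [Nat.cast_nonneg (α := ℝ) n]
  have key : ((n:ℝ)+1) * (Real.pi^2 * t) ≤ ((n:ℝ)+1)^2 * (Real.pi^2 * t) :=
    mul_le_mul_of_nonneg_right h1 (by positivity)
  have e1 : -((n:ℝ)+1)^2 * Real.pi^2 * t / (2*L^2)
      = (-(((n:ℝ)+1)^2 * (Real.pi^2 * t))) / (2*L^2) := by ring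
  have e2 : ((n:ℝ)+1) * (-(Real.pi^2/(2*L^2)) * t)
      = (-(((n:ℝ)+1) * (Real.pi^2 * t))) / (2*L^2) := by ring
  rw [e1, e2, div_le_div_iff₀ (by positivity) (by positivity)]
  have key2 := mul_le_mul_of_nonneg_right key (by positivity : (0:ℝ) ≤ 2*L^2)
  nlinarith [key2]

lemma dk_summable (L t x y : ℝ) (hL : 0 < L) (ht : 0 < t) :
    Summable (fun n : ℕ => Real.exp (-((n:ℝ)+1)^2 * Real.pi^2 * t / (2*L^2)) *
      Real.sin (((n:ℝ)+1) * Real.pi * x / L) * Real.sin (((n:ℝ)+1) * Real.pi * y / L)) := by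
  have hr1 : Real.exp (-(Real.pi^2/(2*L^2)) * t) < 1 := by
    rw [Real.exp_lt_one_iff]
    have : (0:ℝ) < Real.pi^2/(2*L^2) * t := by positivity
    linarith
  apply Summable.of_norm_bounded (g := fun n : ℕ => Real.exp (-(Real.pi^2/(2*L^2)) * t) ^ (n+1))
  · have := (summable_geometric_of_lt_one (Real.exp_nonneg _) hr1).mul_left
      (Real.exp (-(Real.pi^2/(2*L^2)) * t))
    simpa [pow_succ, mul_comm] using this
  · intro n
    exact le_trans (dk_term_abs_le L t x y n) (dk_exp_le L t hL ht n)

lemma sin_lower_bound (L ε z : ℝ) (hL : 0 < L) (hε0 : 0 < ε) (hεL : ε < L/2)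
    (hz : z ∈ Set.Icc ε (L-ε)) :
    Real.sin (Real.pi * ε / L) ≤ Real.sin (Real.pi * z / L) := by
  have hπ := Real.pi_pos
  have ha0 : 0 < Real.pi * ε / L := by positivity
  have ha2 : Real.pi * ε / L < Real.pi / 2 := by
    rw [div_lt_div_iff₀ hL (by norm_num : (0:ℝ) < 2)]
    nlinarith
  have hθ1 : Real.pi * ε / L ≤ Real.pi * z / L := by
    have h1 : Real.pi * ε ≤ Real.pi * z := by nlinarith [hz.1]
    rw [div_le_div_iff₀ hL hL]
    have := mul_le_mul_of_nonneg_right h1 hL.le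
    linarith
  have hθ2 : Real.pi * z / L ≤ Real.pi - Real.pi * ε / L := by
    rw [le_sub_iff_add_le, ← add_div, div_le_iff₀ hL]
    nlinarith [hz.2]
  rcases le_or_gt (Real.pi * z / L) (Real.pi / 2) with h | h
  · exact Real.sin_le_sin_of_le_of_le_pi_div_two (by linarith) h hθ1
  · rw [← Real.sin_pi_sub (Real.pi * z / L)]
    exact Real.sin_le_sin_of_le_of_le_pi_div_two (by linarith) (by linarith) (by linarith)

set_option maxHeartbeats 800000 in
lemma kernel_lower (L ε : ℝ) (hL : 0 < L) (hε0 : 0 < ε) (hεL : ε < L/2)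
    (t : ℝ) (ht : 0 < t)
    (hE2 : Real.exp (-(Real.pi^2/(2*L^2)) * t) ≤ 1/2)
    (hE4 : Real.exp (-(Real.pi^2/(2*L^2)) * t) ≤ Real.sin (Real.pi * ε / L)^2 / 4)
    (x : ℝ) (hx : x ∈ Set.Icc ε (L-ε)) (y : ℝ) (hy : y ∈ Set.Icc ε (L-ε)) :
    (Real.sin (Real.pi * ε / L)^2 / L) * Real.exp (-(Real.pi^2/(2*L^2)) * t)
      ≤ dirichletKernel L t x y := by
  have hπ := Real.pi_pos
  set s := Real.sin (Real.pi * ε / L) with hs_def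
  set E := Real.exp (-(Real.pi^2/(2*L^2)) * t) with hE_def
  have hEpos : 0 < E := Real.exp_pos _
  have hE1 : E ≤ 1 := by linarith
  have hs0 : 0 < s := by
    apply Real.sin_pos_of_pos_of_lt_pi (by positivity)
    rw [div_lt_iff₀ hL]; nlinarith
  have hs1 : s ≤ 1 := Real.sin_le_one _
  set a : ℕ → ℝ := fun n => Real.exp (-((n:ℝ)+1)^2 * Real.pi^2 * t / (2*L^2)) *
      Real.sin (((n:ℝ)+1) * Real.pi * x / L) * Real.sin (((n:ℝ)+1) * Real.pi * y / L) with ha_def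
  have hsum : Summable a := dk_summable L t x y hL ht
  have hsum' : Summable (fun n => a (n+1)) := (summable_nat_add_iff 1).2 hsum
  have ha0 : s^2 * E ≤ a 0 := by
    have hx' : s ≤ Real.sin (Real.pi * x / L) := sin_lower_bound L ε x hL hε0 hεL hx
    have hy' : s ≤ Real.sin (Real.pi * y / L) := sin_lower_bound L ε y hL hε0 hεL hy
    have e0 : a 0 = E * (Real.sin (Real.pi * x / L) * Real.sin (Real.pi * y / L)) := by
      simp only [ha_def, hE_def, Nat.cast_zero]
      rw [show -((0:ℝ)+1)^2 * Real.pi^2 * t / (2*L^2) = -(Real.pi^2/(2*L^2)) * t by ring,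
        show ((0:ℝ)+1) * Real.pi * x / L = Real.pi * x / L by ring,
        show ((0:ℝ)+1) * Real.pi * y / L = Real.pi * y / L by ring]
      ring
    rw [e0]
    have hss : s * s ≤ Real.sin (Real.pi * x / L) * Real.sin (Real.pi * y / L) :=
      mul_le_mul hx' hy' hs0.le (hs0.le.trans hx')
    nlinarith [mul_le_mul_of_nonneg_left hss hEpos.le]
  have hbound : ∀ n : ℕ, |a (n+1)| ≤ E^4 * (1/2)^n := by
    intro n
    have h1 : |a (n+1)| ≤ Real.exp (-(((n+1:ℕ):ℝ)+1)^2 * Real.pi^2 * t / (2*L^2)) :=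
      dk_term_abs_le L t x y (n+1)
    have h2 : Real.exp (-(((n+1:ℕ):ℝ)+1)^2 * Real.pi^2 * t / (2*L^2)) = E ^ ((n+2)^2) := by
      rw [hE_def, ← Real.exp_nat_mul]
      congr 1
      push_cast
      ring
    have h3 : E ^ ((n+2)^2) ≤ E ^ (2*(n+2)) := by
      apply pow_le_pow_of_le_one hEpos.le hE1
      nlinarith
    have h4 : E ^ (2*(n+2)) = E^4 * (E^2)^n := by
      rw [← pow_mul]
      ring
    have h5 : (E^2)^n ≤ (1/2:ℝ)^n := by
      apply pow_le_pow_left₀ (by positivity)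
      nlinarith
    calc |a (n+1)| ≤ E ^ ((n+2)^2) := by rw [← h2]; exact h1
      _ ≤ E ^ (2*(n+2)) := h3
      _ = E^4 * (E^2)^n := h4
      _ ≤ E^4 * (1/2)^n := mul_le_mul_of_nonneg_left h5 (by positivity)
  have hgsum : Summable (fun n : ℕ => E^4 * (1/2:ℝ)^n) :=
    (summable_geometric_of_lt_one (by norm_num) (by norm_num)).mul_left _
  have hgeo : ∑' n : ℕ, E^4 * (1/2:ℝ)^n = 2 * E^4 := by
    rw [tsum_mul_left, tsum_geometric_of_lt_one (by norm_num) (by norm_num)]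
    norm_num
    ring
  have htail : -(2*E^4) ≤ ∑' n, a (n+1) := by
    have hb : ∀ n : ℕ, -(E^4 * (1/2:ℝ)^n) ≤ a (n+1) := fun n => (abs_le.1 (hbound n)).1
    calc -(2*E^4) = ∑' n : ℕ, -(E^4 * (1/2:ℝ)^n) := by rw [tsum_neg, hgeo]
      _ ≤ ∑' n, a (n+1) := Summable.tsum_le_tsum hb hgsum.neg hsum'
  have hsplit : ∑' n, a n = a 0 + ∑' n, a (n+1) := Summable.tsum_eq_zero_add hsum
  have hE2' : E^2 ≤ 1 := by nlinarith
  have hEq : E^4 ≤ E^2 := by nlinarith [sq_nonneg E, sq_nonneg (E^2)]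
  have hE2E : E^2 ≤ (s^2/4) * E := by nlinarith [mul_le_mul_of_nonneg_right hE4 hEpos.le]
  have hEcube : E^4 ≤ (s^2/4) * E := le_trans hEq hE2E
  have hT : (s^2/2) * E ≤ ∑' n, a n := by
    rw [hsplit]
    nlinarith [htail]
  have hdk : dirichletKernel L t x y = (2/L) * ∑' n, a n := rfl
  rw [hdk]
  have h2L : (0:ℝ) < 2/L := by positivity
  calc (s^2 / L) * E = (2/L) * ((s^2/2) * E) := by ring
    _ ≤ (2/L) * ∑' n, a n := mul_le_mul_of_nonneg_left hT h2L.le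

/-- For every `ε ∈ (0, L/2)` there are `t₀ > 0` and `c₁ > 0`, depending only on `ε` and `L`,
such that for every `β > 0` and `x, y ∈ [ε, L-ε]`,
`∫₀^∞ e^{-βt} p_D(t,x,y)² dt ≥ c₁ exp(-(β+2μ₁)t₀)/(β+2μ₁)`, where `μ₁ = π²/(2L²)`. -/
theorem dirichletKernel_sq_laplace_lower (L : ℝ) (hL : 0 < L) (ε : ℝ)
    (hε : ε ∈ Set.Ioo (0:ℝ) (L/2)) :
    ∃ t₀ > (0:ℝ), ∃ c₁ > (0:ℝ), ∀ β > (0:ℝ),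
      ∀ x ∈ Set.Icc ε (L - ε), ∀ y ∈ Set.Icc ε (L - ε),
      ENNReal.ofReal
          (c₁ * Real.exp (-(β + 2 * (Real.pi^2 / (2*L^2))) * t₀) /
            (β + 2 * (Real.pi^2 / (2*L^2))))
        ≤ ∫⁻ t in Set.Ioi (0:ℝ),
            ENNReal.ofReal (Real.exp (-β * t) * (dirichletKernel L t x y)^2) := by
  obtain ⟨hε0, hεL⟩ := hε
  have hπ := Real.pi_pos
  set s := Real.sin (Real.pi * ε / L) with hs_def
  have hs0 : 0 < s := by
    apply Real.sin_pos_of_pos_of_lt_pi (by positivity)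
    rw [div_lt_iff₀ hL]; nlinarith
  have hs1 : s ≤ 1 := Real.sin_le_one _
  set μ : ℝ := Real.pi^2 / (2*L^2) with hμ_def
  have hμ0 : 0 < μ := by positivity
  set M : ℝ := max (Real.log 2) (Real.log (4/s^2)) with hM_def
  have hM0 : 0 < M := lt_of_lt_of_le (Real.log_pos (by norm_num)) (le_max_left _ _)
  refine ⟨M / μ, by positivity, s^4 / L^2, by positivity, ?_⟩
  intro β hβ x hx y hy
  set t₀ : ℝ := M / μ with ht₀_def
  have ht₀0 : 0 < t₀ := by positivity
  set A : ℝ := β + 2 * μ with hA_def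
  have hA0 : 0 < A := by positivity
  have key : ∀ t : ℝ, t₀ ≤ t →
      (s^4 / L^2) * Real.exp (-A * t) ≤ Real.exp (-β * t) * (dirichletKernel L t x y)^2 := by
    intro t ht
    have ht0 : 0 < t := lt_of_lt_of_le ht₀0 ht
    have hμt : M ≤ μ * t := by
      rw [ht₀_def, div_le_iff₀ hμ0] at ht
      linarith [ht]
    have hE2 : Real.exp (-μ * t) ≤ 1/2 := by
      have h12 : Real.exp (-Real.log 2) = 1/2 := by
        rw [Real.exp_neg, Real.exp_log (by norm_num : (0:ℝ) < 2)]; norm_num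
      rw [← h12]
      apply Real.exp_le_exp.2
      have h := le_max_left (Real.log 2) (Real.log (4/s^2))
      rw [hM_def] at hμt
      nlinarith [le_trans h hμt]
    have hE4 : Real.exp (-μ * t) ≤ s^2/4 := by
      have h12 : Real.exp (-Real.log (4/s^2)) = s^2/4 := by
        rw [Real.exp_neg, Real.exp_log (by positivity), inv_div]
      rw [← h12]
      apply Real.exp_le_exp.2
      have h := le_max_right (Real.log 2) (Real.log (4/s^2))
      rw [hM_def] at hμt
      nlinarith [le_trans h hμt]
    have hker := kernel_lower L ε hL hε0 hεL t ht0 hE2 hE4 x hx y hy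
    have hkpos : 0 ≤ (s^2 / L) * Real.exp (-μ * t) := by positivity
    have hsq : ((s^2 / L) * Real.exp (-μ * t))^2 ≤ (dirichletKernel L t x y)^2 :=
      pow_le_pow_left₀ hkpos hker 2
    have hexp : Real.exp (-β*t) * (Real.exp (-μ*t))^2 = Real.exp (-A*t) := by
      rw [← Real.exp_nat_mul, ← Real.exp_add]
      congr 1
      push_cast
      rw [hA_def]; ring
    calc (s^4/L^2) * Real.exp (-A*t)
        = Real.exp (-β*t) * ((s^2/L) * Real.exp (-μ*t))^2 := by
          rw [← hexp]; ring
      _ ≤ Real.exp (-β*t) * (dirichletKernel L t x y)^2 :=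
          mul_le_mul_of_nonneg_left hsq (Real.exp_nonneg _)
  have mono1 : ∫⁻ t in Set.Ioi t₀, ENNReal.ofReal ((s^4/L^2) * Real.exp (-A*t))
      ≤ ∫⁻ t in Set.Ioi (0:ℝ),
          ENNReal.ofReal (Real.exp (-β*t) * (dirichletKernel L t x y)^2) := by
    refine le_trans ?_ (lintegral_mono_set (Set.Ioi_subset_Ioi ht₀0.le))
    apply lintegral_mono_ae
    rw [ae_restrict_iff' measurableSet_Ioi]
    filter_upwards with t ht
    exact ENNReal.ofReal_le_ofReal (key t (le_of_lt ht))
  refine le_trans ?_ mono1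
  have hint : IntegrableOn (fun t : ℝ => (s^4/L^2) * Real.exp (-A*t)) (Set.Ioi t₀) :=
    (exp_neg_integrableOn_Ioi t₀ hA0).const_mul _
  have hnn : 0 ≤ᵐ[volume.restrict (Set.Ioi t₀)] fun t : ℝ => (s^4/L^2) * Real.exp (-A*t) :=
    Filter.Eventually.of_forall fun t => by positivity
  rw [← MeasureTheory.ofReal_integral_eq_lintegral_ofReal hint hnn]
  apply ENNReal.ofReal_le_ofReal
  have hval : ∫ t in Set.Ioi t₀, Real.exp (-A*t) = Real.exp (-A*t₀)/A := by
    have hderiv : ∀ u ∈ Set.Ici t₀,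
        HasDerivAt (fun u : ℝ => -Real.exp (-A*u)/A) (Real.exp (-A*u)) u := by
      intro u _
      have h1 : HasDerivAt (fun u : ℝ => -A*u) (-A) u := by
        simpa using (hasDerivAt_id u).const_mul (-A)
      have h2 := ((h1.exp).neg).div_const A
      have e : -(Real.exp (-A * u) * -A) / A = Real.exp (-A * u) := by
        rw [mul_neg, neg_neg, mul_div_assoc, div_self hA0.ne', mul_one]
      rw [e] at h2
      exact h2
    have htend : Filter.Tendsto (fun u : ℝ => -Real.exp (-A*u)/A) Filter.atTop (nhds 0) := by
      have h1 : Filter.Tendsto (fun u : ℝ => Real.exp (-A*u)) Filter.atTop (nhds 0) := by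
        have := Real.tendsto_exp_neg_atTop_nhds_zero.comp
          (Filter.Tendsto.const_mul_atTop hA0 Filter.tendsto_id)
        simpa [Function.comp_def, neg_mul] using this
      simpa using (h1.neg).div_const A
    have := integral_Ioi_of_hasDerivAt_of_tendsto' hderiv
      (exp_neg_integrableOn_Ioi t₀ hA0) htend
    rw [this]
    field_simp
    ring
  rw [MeasureTheory.integral_const_mul, hval]
  apply le_of_eq
  ring
end

section
/- Let u₀ : [0,L] → [0,∞) be bounded and measurable, and let ε ∈ (0, L/2) be such that ∫_ε^{L−ε} u₀(y) dy > 0. Then there exist t₀ > 0 and c > 0 such that (G_D u₀)(t,x) ≥ c·exp(−μ₁ t) for all t ≥ t₀ and all x ∈ [ε, L−ε], where μ₁ := π²/(2L²). -/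
open MeasureTheory Real

lemma sin_ge_of_mem (a θ : ℝ) (ha : 0 ≤ a) (h1 : a ≤ θ) (h2 : θ ≤ Real.pi - a) :
    Real.sin a ≤ Real.sin θ := by
  rcases le_or_gt θ (Real.pi / 2) with h | h
  · exact Real.sin_le_sin_of_le_of_le_pi_div_two (by linarith [Real.pi_pos]) h h1
  · rw [← Real.sin_pi_sub θ]
    exact Real.sin_le_sin_of_le_of_le_pi_div_two (by linarith [Real.pi_pos]) (by linarith) (by linarith)

lemma summable_exp_sq (c a : ℝ) (hc : 0 < c) (ha : 1 ≤ a) :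
    Summable (fun n : ℕ => Real.exp (-((n : ℝ) + a) ^ 2 * c)) := by
  have hr0 : (0:ℝ) ≤ Real.exp (-c) := (Real.exp_pos _).le
  have hr1 : Real.exp (-c) < 1 := Real.exp_lt_one_iff.2 (by linarith)
  refine Summable.of_nonneg_of_le (fun n => (Real.exp_pos _).le) (fun n => ?_)
    ((summable_geometric_of_lt_one hr0 hr1).mul_left (Real.exp (-(a*c))))
  have h1 : (n : ℝ) + a ≤ ((n : ℝ) + a) ^ 2 := by
    nlinarith [Nat.cast_nonneg (α := ℝ) n]
  calc Real.exp (-((n : ℝ) + a) ^ 2 * c) ≤ Real.exp (-((n:ℝ) + a) * c) := by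
        apply Real.exp_le_exp.2; nlinarith
    _ = Real.exp (-(a*c)) * Real.exp (-c) ^ n := by
        rw [← Real.exp_nat_mul, ← Real.exp_add]; ring_nf

lemma tail_bound (c : ℝ) (hc : 0 < c) (hhalf : Real.exp (-c) ≤ 1/2) :
    ∑' n : ℕ, Real.exp (-((n:ℝ)+2)^2 * c) ≤ 2 * Real.exp (-(4*c)) := by
  have hsum1 := summable_exp_sq c 2 hc one_le_two
  have hsum2 : Summable (fun n : ℕ => Real.exp (-(4*c)) * (1/2:ℝ)^n) :=
    (summable_geometric_of_lt_one (by norm_num) (by norm_num)).mul_left _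
  calc (∑' n : ℕ, Real.exp (-((n:ℝ)+2)^2 * c))
      ≤ ∑' n : ℕ, Real.exp (-(4*c)) * (1/2:ℝ)^n := by
        refine Summable.tsum_le_tsum (fun n => ?_) hsum1 hsum2
        have h1 : Real.exp (-((n:ℝ)+2)^2*c) ≤ Real.exp (-(4*c)) * Real.exp (-c)^n := by
          rw [← Real.exp_nat_mul, ← Real.exp_add]
          apply Real.exp_le_exp.2
          nlinarith [mul_nonneg (show (0:ℝ) ≤ (n:ℝ)^2 + 3*n by positivity) hc.le]
        have h2 : Real.exp (-c)^n ≤ (1/2:ℝ)^n :=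
          pow_le_pow_left₀ (Real.exp_pos _).le hhalf n
        nlinarith [Real.exp_pos (-(4*c)), pow_nonneg (Real.exp_pos (-c)).le n]
    _ = 2 * Real.exp (-(4*c)) := by
        rw [tsum_mul_left, tsum_geometric_two]; ring

/-- The Dirichlet semigroup applied to the initial data: `(G_D u₀)(t,x) = ∫₀^L p_D(t,x,y) u₀(y) dy`. -/
noncomputable def GD (L : ℝ) (u₀ : ℝ → ℝ) (t x : ℝ) : ℝ :=
  ∫ y in (0:ℝ)..L, dirichletKernel L t x y * u₀ y

set_option maxHeartbeats 1000000 in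
/-- If `u₀ : [0,L] → [0,∞)` is bounded measurable and `∫_ε^{L-ε} u₀ > 0` for some
`ε ∈ (0,L/2)`, then there are `t₀ > 0` and `c > 0` such that
`(G_D u₀)(t,x) ≥ c exp(-μ₁ t)` for all `t ≥ t₀` and `x ∈ [ε, L-ε]`, with `μ₁ = π²/(2L²)`. -/
theorem GD_lower_exp (L : ℝ) (hL : 0 < L) (u₀ : ℝ → ℝ)
    (hmeas : Measurable u₀) (hnonneg : ∀ y ∈ Set.Icc (0:ℝ) L, 0 ≤ u₀ y)
    (hbdd : ∃ M : ℝ, ∀ y ∈ Set.Icc (0:ℝ) L, u₀ y ≤ M)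
    (ε : ℝ) (hε : ε ∈ Set.Ioo (0:ℝ) (L/2))
    (hpos : 0 < ∫ y in ε..(L - ε), u₀ y) :
    ∃ t₀ > (0:ℝ), ∃ c > (0:ℝ), ∀ t ≥ t₀, ∀ x ∈ Set.Icc ε (L - ε),
      c * Real.exp (-(Real.pi^2 / (2*L^2)) * t) ≤ GD L u₀ t x := by
  obtain ⟨hε0, hεL⟩ := hε
  obtain ⟨M, hM⟩ := hbdd
  have hπ := Real.pi_pos
  have hεle : ε ≤ L - ε := by linarith
  set s : ℝ := Real.sin (Real.pi * ε / L) with hs_def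
  have hs_pos : 0 < s := by
    apply Real.sin_pos_of_pos_of_lt_pi (by positivity)
    rw [div_lt_iff₀ hL]; nlinarith
  set I : ℝ := ∫ y in ε..(L-ε), u₀ y with hI_def
  have hI_pos : 0 < I := hpos
  set M' : ℝ := max M 1 with hM'_def
  have hM'_pos : 0 < M' := lt_of_lt_of_le one_pos (le_max_right _ _)
  have hMle : ∀ y ∈ Set.Icc (0:ℝ) L, |u₀ y| ≤ M' := fun y hy => by
    rw [abs_of_nonneg (hnonneg y hy)]; exact le_trans (hM y hy) (le_max_left _ _)
  set μ : ℝ := Real.pi^2 / (2*L^2) with hμ_def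
  have hμ_pos : 0 < μ := by positivity
  set δ : ℝ := min (1/2) (s^2*I/(4*M'*L)) with hδ_def
  have hδ_pos : 0 < δ := lt_min (by norm_num) (by positivity)
  have hδ_half : δ ≤ 1/2 := min_le_left _ _
  have hδ2 : δ * (4*M'*L) ≤ s^2*I :=
    (le_div_iff₀ (by positivity)).1 (min_le_right _ _)
  refine ⟨max 1 (Real.log δ⁻¹ / μ), lt_of_lt_of_le one_pos (le_max_left _ _),
    (1/L) * s^2 * I, by positivity, fun t ht x hx => ?_⟩
  have ht1 : (1:ℝ) ≤ t := le_trans (le_max_left _ _) ht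
  have ht_pos : 0 < t := lt_of_lt_of_le one_pos ht1
  have hrδ : Real.exp (-(μ*t)) ≤ δ := by
    have h1 : Real.log δ⁻¹ / μ ≤ t := le_trans (le_max_right _ _) ht
    have h2 : Real.log δ⁻¹ ≤ μ * t := by
      rw [div_le_iff₀ hμ_pos] at h1; linarith [h1]
    rw [Real.log_inv] at h2
    calc Real.exp (-(μ*t)) ≤ Real.exp (Real.log δ) := Real.exp_le_exp.2 (by linarith)
      _ = δ := Real.exp_log hδ_pos
  set q : ℝ := μ * t with hq_def
  have hq_pos : 0 < q := by positivity
  set r : ℝ := Real.exp (-q) with hr_def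
  have hr_pos : 0 < r := Real.exp_pos _
  -- the term functions
  set g : ℕ → ℝ → ℝ := fun n y =>
    Real.exp (-((n:ℝ)+1)^2 * Real.pi^2 * t / (2*L^2)) *
      Real.sin (((n:ℝ)+1) * Real.pi * x / L) * Real.sin (((n:ℝ)+1) * Real.pi * y / L)
    with hg_def
  have hEeq : ∀ n : ℕ, -((n:ℝ)+1)^2 * Real.pi^2 * t / (2*L^2) = -((n:ℝ)+1)^2 * q := by
    intro n; rw [hq_def, hμ_def]; ring
  have hgbound : ∀ n y, ‖g n y‖ ≤ Real.exp (-((n:ℝ)+1)^2 * q) := by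
    intro n y
    rw [hg_def]
    simp only [Real.norm_eq_abs, abs_mul, Real.abs_exp, hEeq n]
    have h1 : |Real.sin (((n:ℝ)+1) * Real.pi * x / L)| ≤ 1 := Real.abs_sin_le_one _
    have h2 : |Real.sin (((n:ℝ)+1) * Real.pi * y / L)| ≤ 1 := Real.abs_sin_le_one _
    have h3 := Real.exp_pos (-((n:ℝ)+1)^2 * q)
    calc Real.exp (-((n:ℝ)+1)^2 * q) * |Real.sin (((n:ℝ)+1) * Real.pi * x / L)|
          * |Real.sin (((n:ℝ)+1) * Real.pi * y / L)|
        ≤ Real.exp (-((n:ℝ)+1)^2 * q) * 1 * 1 := by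
          apply mul_le_mul _ h2 (abs_nonneg _) (by positivity)
          exact mul_le_mul_of_nonneg_left h1 h3.le
      _ = Real.exp (-((n:ℝ)+1)^2 * q) := by ring
  have hsummable : ∀ y, Summable (fun n => g n y) := fun y =>
    Summable.of_norm_bounded (summable_exp_sq q 1 hq_pos le_rfl) (fun n => hgbound n y)
  have htailbound : ∀ n : ℕ, ∀ y, ‖g (n+1) y‖ ≤ Real.exp (-((n:ℝ)+2)^2 * q) := by
    intro n y
    have := hgbound (n+1) y
    push_cast at this ⊢
    convert this using 3 <;> ring
  set S : ℝ := ∑' n : ℕ, Real.exp (-((n:ℝ)+2)^2 * q) with hS_def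
  have hS_nonneg : 0 ≤ S := tsum_nonneg (fun n => (Real.exp_pos _).le)
  have hS_le : S ≤ 2 * Real.exp (-(4*q)) := tail_bound q hq_pos (le_trans hrδ hδ_half)
  set R : ℝ → ℝ := fun y => ∑' n, g (n+1) y with hR_def
  have hRbound : ∀ y, ‖R y‖ ≤ S := fun y =>
    tsum_of_norm_bounded (summable_exp_sq q 2 hq_pos one_le_two).hasSum (fun n => htailbound n y)
  have hgcont : ∀ n : ℕ, Continuous (fun y => g n y) := by
    intro n; rw [hg_def]; fun_prop
  have hRcont : Continuous R :=
    continuous_tsum (fun n => hgcont (n+1)) (summable_exp_sq q 2 hq_pos one_le_two)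
      (fun n y => htailbound n y)
  -- integrability of u₀
  have hu0 : IntegrableOn u₀ (Set.Ioc 0 L) volume := by
    refine Integrable.mono'
      ((integrableOn_const measure_Ioc_lt_top.ne) : IntegrableOn (fun _ => M') _ _)
      hmeas.aestronglyMeasurable.restrict ?_
    filter_upwards [ae_restrict_mem measurableSet_Ioc] with y hy
    exact hMle y (Set.Ioc_subset_Icc_self hy)
  have hIoc : Set.uIoc (0:ℝ) L = Set.Ioc 0 L := Set.uIoc_of_le hL.le
  have hmul_int : ∀ f : ℝ → ℝ, Continuous f → (∃ C, ∀ y, ‖f y‖ ≤ C) →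
      IntervalIntegrable (fun y => f y * u₀ y) volume 0 L := by
    intro f hf hfb
    rw [intervalIntegrable_iff, hIoc]
    exact hfb.elim fun C hC => Integrable.bdd_mul hu0 hf.aestronglyMeasurable.restrict (ae_of_all _ hC)
  have hint0 : IntervalIntegrable (fun y => g 0 y * u₀ y) volume 0 L :=
    hmul_int _ (hgcont 0) ⟨Real.exp (-((0:ℝ)+1)^2 * q), fun y => by
      simpa using hgbound 0 y⟩
  have hintR : IntervalIntegrable (fun y => R y * u₀ y) volume 0 L :=
    hmul_int _ hRcont ⟨S, hRbound⟩
  have hintsin : IntervalIntegrable (fun y => Real.sin (Real.pi * y / L) * u₀ y) volume 0 L :=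
    hmul_int _ (by fun_prop) ⟨1, fun y => Real.abs_sin_le_one _⟩
  -- first-mode coefficient
  set A : ℝ := ∫ y in (0:ℝ)..L, Real.sin (Real.pi * y / L) * u₀ y with hA_def
  have hsin_nonneg : ∀ y ∈ Set.Icc (0:ℝ) L, 0 ≤ Real.sin (Real.pi * y / L) * u₀ y := by
    intro y hy
    apply mul_nonneg _ (hnonneg y hy)
    apply Real.sin_nonneg_of_nonneg_of_le_pi (div_nonneg (mul_nonneg hπ.le hy.1) hL.le)
    rw [div_le_iff₀ hL]; nlinarith [hy.2]
  have hsin_ge : ∀ z ∈ Set.Icc ε (L-ε), s ≤ Real.sin (Real.pi * z / L) := by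
    intro z hz
    apply sin_ge_of_mem _ _ (div_nonneg (mul_nonneg hπ.le hε0.le) hL.le)
    · gcongr
      exact hz.1
    · rw [le_sub_iff_add_le, ← add_div, div_le_iff₀ hL]
      nlinarith [hz.2]
  have hA_ge : s * I ≤ A := by
    have i1 : IntervalIntegrable (fun y => Real.sin (Real.pi * y / L) * u₀ y) volume 0 ε :=
      hintsin.mono_set (by rw [Set.uIcc_of_le hε0.le, Set.uIcc_of_le hL.le]
                           exact Set.Icc_subset_Icc le_rfl (by linarith))
    have i2 : IntervalIntegrable (fun y => Real.sin (Real.pi * y / L) * u₀ y) volume ε (L-ε) :=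
      hintsin.mono_set (by rw [Set.uIcc_of_le hεle, Set.uIcc_of_le hL.le]
                           exact Set.Icc_subset_Icc hε0.le (by linarith))
    have i3 : IntervalIntegrable (fun y => Real.sin (Real.pi * y / L) * u₀ y) volume (L-ε) L :=
      hintsin.mono_set (by rw [Set.uIcc_of_le (by linarith : L-ε ≤ L), Set.uIcc_of_le hL.le]
                           exact Set.Icc_subset_Icc (by linarith) le_rfl)
    have iu : IntervalIntegrable u₀ volume ε (L-ε) := by
      rw [intervalIntegrable_iff, Set.uIoc_of_le hεle]
      exact hu0.mono_set (Set.Ioc_subset_Ioc hε0.le (by linarith))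
    have hsplit : A = (∫ y in (0:ℝ)..ε, Real.sin (Real.pi * y / L) * u₀ y)
        + ((∫ y in ε..(L-ε), Real.sin (Real.pi * y / L) * u₀ y)
        + ∫ y in (L-ε)..L, Real.sin (Real.pi * y / L) * u₀ y) := by
      rw [hA_def, intervalIntegral.integral_add_adjacent_intervals i2 i3,
        intervalIntegral.integral_add_adjacent_intervals i1 (i2.trans i3)]
    have h1 : 0 ≤ ∫ y in (0:ℝ)..ε, Real.sin (Real.pi * y / L) * u₀ y :=
      intervalIntegral.integral_nonneg hε0.le (fun y hy =>
        hsin_nonneg y ⟨hy.1, by linarith [hy.2]⟩)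
    have h3 : 0 ≤ ∫ y in (L-ε)..L, Real.sin (Real.pi * y / L) * u₀ y :=
      intervalIntegral.integral_nonneg (by linarith) (fun y hy =>
        hsin_nonneg y ⟨by linarith [hy.1], hy.2⟩)
    have h2 : s * I ≤ ∫ y in ε..(L-ε), Real.sin (Real.pi * y / L) * u₀ y := by
      rw [hI_def, ← intervalIntegral.integral_const_mul]
      apply intervalIntegral.integral_mono_on hεle (iu.const_mul s) i2
      intro y hy
      exact mul_le_mul_of_nonneg_right (hsin_ge y hy)
        (hnonneg y ⟨by linarith [hy.1], by linarith [hy.2]⟩)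
    linarith
  have hA_nonneg : 0 ≤ A := le_trans (by positivity) hA_ge
  -- decompose GD
  have hGD : GD L u₀ t x = (2/L) * ((∫ y in (0:ℝ)..L, g 0 y * u₀ y)
      + ∫ y in (0:ℝ)..L, R y * u₀ y) := by
    have hker : ∀ y : ℝ, dirichletKernel L t x y = (2/L) * (g 0 y + R y) := by
      intro y
      unfold dirichletKernel
      congr 1
      calc (∑' n : ℕ, Real.exp (-((n:ℝ)+1)^2 * Real.pi^2 * t / (2*L^2)) *
              Real.sin (((n:ℝ)+1) * Real.pi * x / L) * Real.sin (((n:ℝ)+1) * Real.pi * y / L))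
          = ∑' n : ℕ, g n y := by rw [hg_def]
        _ = g 0 y + ∑' n : ℕ, g (n+1) y := (hsummable y).tsum_eq_zero_add
        _ = g 0 y + R y := by rw [hR_def]
    rw [GD, ← intervalIntegral.integral_add hint0 hintR, ← intervalIntegral.integral_const_mul]
    apply intervalIntegral.integral_congr
    intro y _
    show dirichletKernel L t x y * u₀ y = (2/L) * (g 0 y * u₀ y + R y * u₀ y)
    rw [hker y]; ring
  -- first integral equals K * A
  have hfirst : (∫ y in (0:ℝ)..L, g 0 y * u₀ y)
      = (r * Real.sin (Real.pi * x / L)) * A := by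
    rw [hA_def, ← intervalIntegral.integral_const_mul]
    apply intervalIntegral.integral_congr
    intro y _
    show g 0 y * u₀ y = (r * Real.sin (Real.pi * x / L)) * (Real.sin (Real.pi * y / L) * u₀ y)
    simp only [hg_def, Nat.cast_zero, hr_def]
    rw [show -((0:ℝ)+1)^2 * Real.pi^2 * t / (2*L^2) = -q from by rw [hq_def, hμ_def]; ring]
    have hxx : ((0:ℝ)+1) * Real.pi * x / L = Real.pi * x / L := by ring
    have hyy : ((0:ℝ)+1) * Real.pi * y / L = Real.pi * y / L := by ring
    rw [hxx, hyy]; ring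
  -- second integral bound
  have hsecond : -(S * M' * L) ≤ ∫ y in (0:ℝ)..L, R y * u₀ y := by
    have hb := intervalIntegral.norm_integral_le_of_norm_le_const
      (C := S * M') (f := fun y => R y * u₀ y) (a := 0) (b := L) ?_
    · rw [Real.norm_eq_abs, abs_le] at hb
      calc -(S * M' * L) = -(S * M' * |L - 0|) := by rw [abs_of_pos (by linarith)]; ring
        _ ≤ _ := hb.1
    · intro y hy
      rw [hIoc] at hy
      rw [Real.norm_eq_abs, abs_mul]
      exact mul_le_mul (hRbound y) (hMle y (Set.Ioc_subset_Icc_self hy))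
        (abs_nonneg _) hS_nonneg
  -- sin lower bound at x
  have hsinx : s ≤ Real.sin (Real.pi * x / L) := hsin_ge x hx
  -- put it together
  have hKA : r * s * (s * I) ≤ (r * Real.sin (Real.pi * x / L)) * A := by
    apply mul_le_mul _ hA_ge (by positivity)
      (mul_nonneg hr_pos.le (le_trans hs_pos.le hsinx))
    exact mul_le_mul_of_nonneg_left hsinx hr_pos.le
  have hGDge : (2/L) * (r * s * (s * I) - S * M' * L) ≤ GD L u₀ t x := by
    rw [hGD]
    apply mul_le_mul_of_nonneg_left _ (by positivity)
    linarith
  have hexp4 : Real.exp (-(4*q)) = r^4 := by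
    rw [hr_def, ← Real.exp_nat_mul]; congr 1; push_cast; ring
  rw [show -(Real.pi^2/(2*L^2)) * t = -q from by rw [hq_def, hμ_def]; ring, ← hr_def]
  -- final arithmetic: (1/L) s² I r ≤ (2/L)(r s² I − S M' L)
  have hr3 : r^3 ≤ δ := by
    have hrle : r ≤ δ := hrδ
    have hr1 : r ≤ 1 := by linarith
    nlinarith [hr_pos.le, mul_nonneg hr_pos.le hr_pos.le]
  have hS4 : S ≤ 2 * r^4 := by rw [← hexp4]; exact hS_le
  have hSfin : S * M' * L ≤ 2 * r^4 * M' * L :=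
    mul_le_mul_of_nonneg_right (mul_le_mul_of_nonneg_right hS4 hM'_pos.le) hL.le
  have hkey : 4 * M' * L * r^4 ≤ s^2 * I * r := by
    have h1 : r^3 * (4*M'*L) ≤ s^2 * I :=
      le_trans (mul_le_mul_of_nonneg_right hr3 (by positivity)) hδ2
    nlinarith [mul_le_mul_of_nonneg_right h1 hr_pos.le]
  have hmain : s^2*I*r + 2*(S*M'*L) ≤ 2*(r*s*(s*I)) := by nlinarith [hSfin, hkey]
  calc (1/L) * s^2 * I * r = (s^2*I*r) / L := by ring
    _ ≤ (2*(r*s*(s*I) - S*M'*L)) / L := by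
        gcongr ?_ / L
        linarith [hmain]
    _ = (2/L) * (r * s * (s*I) - S * M' * L) := by ring
    _ ≤ GD L u₀ t x := hGDge
end
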